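/- Fix m ≥ 2 mean times between false alarms 1 ≤ τ_1 < ⋯ < τ_m, c_F > 0, and attacker types φ = 1,…,n_φ with priors π_φ ≥ 0 summing to 1, where for each type φ the payoffs satisfy either 0 < I_1^φ < I_2^φ < ⋯ < I_m^φ or I_j^φ = 0 for all j. Then a moving target defense exists — i.e., there exists a Bayesian Nash equilibrium (p*, q*_1, …, q*_{n_φ}) in which every entry of p* is strictly less than 1 — if, and only if, c_F/τ_{m−1} ≤ c_F/τ_m + Σ_{φ=1}^{n_φ} π_φ I_m^φ. -/

import Mathlib

open Matrix BigOperators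

/-- A (mixed strategy) probability vector: nonnegative entries summing to one. -/
def IsProbVec {m : ℕ} (p : Fin m → ℝ) : Prop := (∀ i, 0 ≤ p i) ∧ ∑ i, p i = 1

/-- Defender cost matrix `Ω(φ)_{i,j} = c_F/τ_i + 1{j ≤ i}·I_j^φ`. -/
noncomputable def OmegaMat {m nφ : ℕ} (τ : Fin m → ℝ) (cF : ℝ) (I : Fin nφ → Fin m → ℝ)
    (φ : Fin nφ) : Matrix (Fin m) (Fin m) ℝ :=
  Matrix.of fun i j => cF / τ i + if j ≤ i then I φ j else 0

/-- Attacker payoff matrix `Υ(φ)_{i,j} = 1{j ≤ i}·I_j^φ`. -/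
noncomputable def UpsilonMat {m nφ : ℕ} (I : Fin nφ → Fin m → ℝ) (φ : Fin nφ) :
    Matrix (Fin m) (Fin m) ℝ :=
  Matrix.of fun i j => if j ≤ i then I φ j else 0

/-- Bayesian Nash equilibrium of the threshold-switching game: `p` minimizes the
prior-averaged defender cost against `(q_φ)` and each `q_φ` maximizes the payoff of
attacker type `φ` against `p`. -/
noncomputable def IsBNE {m nφ : ℕ} (τ : Fin m → ℝ) (cF : ℝ) (I : Fin nφ → Fin m → ℝ)
    (π : Fin nφ → ℝ) (p : Fin m → ℝ) (q : Fin nφ → Fin m → ℝ) : Prop :=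
  IsProbVec p ∧ (∀ φ, IsProbVec (q φ)) ∧
  (∀ p' : Fin m → ℝ, IsProbVec p' →
    ∑ φ, π φ * (p ⬝ᵥ (OmegaMat τ cF I φ *ᵥ q φ)) ≤
      ∑ φ, π φ * (p' ⬝ᵥ (OmegaMat τ cF I φ *ᵥ q φ))) ∧
  (∀ φ, ∀ q' : Fin m → ℝ, IsProbVec q' →
    p ⬝ᵥ (UpsilonMat I φ *ᵥ q') ≤ p ⬝ᵥ (UpsilonMat I φ *ᵥ q φ))

namespace MTDaux

variable {m nφ : ℕ}

/-- Tail probability `P_j = ∑_{i ≥ j} p_i`. -/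
noncomputable def tailP (p : Fin m → ℝ) (j : Fin m) : ℝ :=
  ∑ i ∈ Finset.univ.filter (fun i => j ≤ i), p i

lemma tailP_nonneg {p : Fin m → ℝ} (hp : ∀ i, 0 ≤ p i) (j : Fin m) : 0 ≤ tailP p j :=
  Finset.sum_nonneg fun i _ => hp i

lemma tailP_comb (c d : ℝ) (u w : Fin m → ℝ) (j : Fin m) :
    tailP (fun k => c * u k + d * w k) j = c * tailP u j + d * tailP w j := by
  simp [tailP, Finset.sum_add_distrib, Finset.mul_sum]

lemma tailP_single (i j : Fin m) :
    tailP (Pi.single i (1:ℝ)) j = if j ≤ i then 1 else 0 := by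
  have : ∀ k, (Pi.single i (1:ℝ) : Fin m → ℝ) k = if k = i then (1:ℝ) else 0 := by
    intro k; simp [Pi.single_apply]
  simp only [tailP, this, Finset.sum_ite_eq', Finset.mem_filter, Finset.mem_univ, true_and]

lemma sum_single_mul (g : Fin m → ℝ) (i0 : Fin m) :
    ∑ i, (Pi.single i0 (1:ℝ) : Fin m → ℝ) i * g i = g i0 := by
  have : ∀ k, (Pi.single i0 (1:ℝ) : Fin m → ℝ) k = if k = i0 then (1:ℝ) else 0 := by
    intro k; simp [Pi.single_apply]
  simp only [this, ite_mul, one_mul, zero_mul, Finset.sum_ite_eq', Finset.mem_univ, if_true]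

lemma dot_upsilon (I : Fin nφ → Fin m → ℝ) (φ : Fin nφ) (p q : Fin m → ℝ) :
    p ⬝ᵥ (UpsilonMat I φ *ᵥ q) = ∑ j, q j * (I φ j * tailP p j) := by
  simp only [dotProduct, Matrix.mulVec, UpsilonMat, Matrix.of_apply, Finset.mul_sum]
  rw [Finset.sum_comm]
  refine Finset.sum_congr rfl fun j _ => ?_
  have h1 : ∀ i, p i * ((if j ≤ i then I φ j else 0) * q j)
      = if j ≤ i then q j * (I φ j * p i) else 0 := by
    intro i; split_ifs <;> ring
  simp_rw [h1]
  rw [← Finset.sum_filter, tailP, Finset.mul_sum, Finset.mul_sum]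

lemma dot_omega (τ : Fin m → ℝ) (cF : ℝ) (I : Fin nφ → Fin m → ℝ) (φ : Fin nφ)
    (p q : Fin m → ℝ) (hq : ∑ j, q j = 1) :
    p ⬝ᵥ (OmegaMat τ cF I φ *ᵥ q)
      = (∑ i, p i * (cF / τ i)) + p ⬝ᵥ (UpsilonMat I φ *ᵥ q) := by
  simp only [dotProduct, Matrix.mulVec, OmegaMat, UpsilonMat, Matrix.of_apply]
  have h1 : ∀ i, (∑ j, (cF / τ i + if j ≤ i then I φ j else 0) * q j)
      = (cF / τ i) * (∑ j, q j) + ∑ j, (if j ≤ i then I φ j else 0) * q j := by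
    intro i
    rw [Finset.mul_sum, ← Finset.sum_add_distrib]
    exact Finset.sum_congr rfl fun j _ => by ring
  simp_rw [h1, hq, mul_one, mul_add]
  rw [Finset.sum_add_distrib]

/-- The defender's expected cost of playing pure strategy `i` against `q`. -/
noncomputable def Dq (τ : Fin m → ℝ) (cF : ℝ) (I : Fin nφ → Fin m → ℝ) (π : Fin nφ → ℝ)
    (q : Fin nφ → Fin m → ℝ) (i : Fin m) : ℝ :=
  cF / τ i + ∑ φ, π φ * ∑ j, (if j ≤ i then I φ j else 0) * q φ j

lemma sum_pD (τ : Fin m → ℝ) (cF : ℝ) (I : Fin nφ → Fin m → ℝ) (π : Fin nφ → ℝ)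
    (p : Fin m → ℝ) (q : Fin nφ → Fin m → ℝ) :
    ∑ i, p i * Dq τ cF I π q i
      = (∑ i, p i * (cF / τ i)) + ∑ φ, π φ * (p ⬝ᵥ (UpsilonMat I φ *ᵥ q φ)) := by
  simp only [Dq, mul_add]
  rw [Finset.sum_add_distrib]
  congr 1
  simp only [dotProduct, Matrix.mulVec, UpsilonMat, Matrix.of_apply]
  simp_rw [Finset.mul_sum]
  rw [Finset.sum_comm]
  exact Finset.sum_congr rfl fun φ _ => Finset.sum_congr rfl fun i _ =>
    Finset.sum_congr rfl fun x _ => by ring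

lemma avg_cost_eq (τ : Fin m → ℝ) (cF : ℝ) (I : Fin nφ → Fin m → ℝ) {π : Fin nφ → ℝ}
    (hπ1 : ∑ φ, π φ = 1) (p : Fin m → ℝ) {q : Fin nφ → Fin m → ℝ}
    (hq : ∀ φ, ∑ j, q φ j = 1) :
    ∑ φ, π φ * (p ⬝ᵥ (OmegaMat τ cF I φ *ᵥ q φ)) = ∑ i, p i * Dq τ cF I π q i := by
  rw [sum_pD]
  have hfor : ∀ φ : Fin nφ, p ⬝ᵥ (OmegaMat τ cF I φ *ᵥ q φ)
      = (∑ i, p i * (cF / τ i)) + p ⬝ᵥ (UpsilonMat I φ *ᵥ q φ) :=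
    fun φ => dot_omega τ cF I φ p (q φ) (hq φ)
  simp_rw [hfor, mul_add]
  rw [Finset.sum_add_distrib, ← Finset.sum_mul, hπ1, one_mul]

lemma single_nonneg' (i0 k : Fin m) : 0 ≤ (Pi.single i0 (1:ℝ) : Fin m → ℝ) k := by
  rcases eq_or_ne k i0 with rfl | hk
  · simp
  · simp [Pi.single_apply, hk]

lemma sum_single_one (i0 : Fin m) : ∑ k, (Pi.single i0 (1:ℝ) : Fin m → ℝ) k = 1 := by
  rw [Finset.sum_pi_single']
  simp

lemma isProbVec_single (i0 : Fin m) : IsProbVec (Pi.single i0 (1:ℝ) : Fin m → ℝ) :=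
  ⟨single_nonneg' i0, sum_single_one i0⟩

lemma probVec_iff (p : Fin m → ℝ) : p ∈ stdSimplex ℝ (Fin m) ↔ IsProbVec p := Iff.rfl

lemma comb_mem {c d : ℝ} (i0 i1 : Fin m) (hc : 0 ≤ c) (hd : 0 ≤ d) (hcd : c + d = 1) :
    (fun k => c * (Pi.single i0 (1:ℝ) : Fin m → ℝ) k
      + d * (Pi.single i1 (1:ℝ) : Fin m → ℝ) k) ∈ stdSimplex ℝ (Fin m) := by
  constructor
  · intro k
    exact add_nonneg (mul_nonneg hc (single_nonneg' i0 k)) (mul_nonneg hd (single_nonneg' i1 k))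
  · show (∑ k, (c * (Pi.single i0 (1:ℝ) : Fin m → ℝ) k
      + d * (Pi.single i1 (1:ℝ) : Fin m → ℝ) k)) = 1
    rw [Finset.sum_add_distrib, ← Finset.mul_sum, ← Finset.mul_sum,
      sum_single_one, sum_single_one, mul_one, mul_one, hcd]

lemma comb_tail (c d : ℝ) (i0 i1 j : Fin m) :
    tailP (fun k => c * (Pi.single i0 (1:ℝ) : Fin m → ℝ) k
        + d * (Pi.single i1 (1:ℝ) : Fin m → ℝ) k) j
      = c * (if j ≤ i0 then (1:ℝ) else 0) + d * (if j ≤ i1 then (1:ℝ) else 0) := by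
  rw [tailP_comb, tailP_single, tailP_single]

lemma comb_sum (c d : ℝ) (i0 i1 : Fin m) (g : Fin m → ℝ) :
    ∑ k, (c * (Pi.single i0 (1:ℝ) : Fin m → ℝ) k
        + d * (Pi.single i1 (1:ℝ) : Fin m → ℝ) k) * g k = c * g i0 + d * g i1 := by
  have h : ∀ k, (c * (Pi.single i0 (1:ℝ) : Fin m → ℝ) k
        + d * (Pi.single i1 (1:ℝ) : Fin m → ℝ) k) * g k
      = c * ((Pi.single i0 (1:ℝ) : Fin m → ℝ) k * g k)
        + d * ((Pi.single i1 (1:ℝ) : Fin m → ℝ) k * g k) := fun k => by ring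
  simp_rw [h]
  rw [Finset.sum_add_distrib, ← Finset.mul_sum, ← Finset.mul_sum,
    sum_single_mul, sum_single_mul]

section WithNe

variable [NeZero m]

/-- Best attack payoff of type `φ` against defender mixed strategy `p`. -/
noncomputable def Vm (I : Fin nφ → Fin m → ℝ) (φ : Fin nφ) (p : Fin m → ℝ) : ℝ :=
  Finset.univ.sup' Finset.univ_nonempty (fun j => I φ j * tailP p j)

/-- The defender's worst-case averaged cost of playing `p`. -/
noncomputable def Hf (τ : Fin m → ℝ) (cF : ℝ) (I : Fin nφ → Fin m → ℝ) (π : Fin nφ → ℝ)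
    (p : Fin m → ℝ) : ℝ :=
  (∑ i, p i * (cF / τ i)) + ∑ φ, π φ * Vm I φ p

lemma le_Vm (I : Fin nφ → Fin m → ℝ) (φ : Fin nφ) (p : Fin m → ℝ) (j : Fin m) :
    I φ j * tailP p j ≤ Vm I φ p := by
  unfold Vm
  exact Finset.le_sup' (fun j => I φ j * tailP p j) (Finset.mem_univ j)

lemma Vm_eq_of {I : Fin nφ → Fin m → ℝ} {φ : Fin nφ} {p : Fin m → ℝ} (j0 : Fin m)
    (hub : ∀ j, I φ j * tailP p j ≤ I φ j0 * tailP p j0) :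
    Vm I φ p = I φ j0 * tailP p j0 :=
  le_antisymm (Finset.sup'_le _ _ fun j _ => hub j) (le_Vm I φ p j0)

lemma payoff_le_Vm (I : Fin nφ → Fin m → ℝ) (φ : Fin nφ) (p : Fin m → ℝ)
    {q' : Fin m → ℝ} (hq' : IsProbVec q') :
    p ⬝ᵥ (UpsilonMat I φ *ᵥ q') ≤ Vm I φ p := by
  rw [dot_upsilon]
  calc ∑ j, q' j * (I φ j * tailP p j) ≤ ∑ j, q' j * Vm I φ p :=
        Finset.sum_le_sum fun j _ =>
          mul_le_mul_of_nonneg_left (le_Vm I φ p j) (hq'.1 j)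
    _ = Vm I φ p := by rw [← Finset.sum_mul, hq'.2, one_mul]

lemma cont_Hf (τ : Fin m → ℝ) (cF : ℝ) (I : Fin nφ → Fin m → ℝ) (π : Fin nφ → ℝ) :
    Continuous (Hf τ cF I π) := by
  apply Continuous.add
  · exact continuous_finset_sum _ fun i _ => (continuous_apply i).mul continuous_const
  · refine continuous_finset_sum _ fun φ _ => Continuous.mul continuous_const ?_
    unfold Vm tailP
    refine Continuous.finset_sup'_apply Finset.univ_nonempty fun j _ => ?_
    exact continuous_const.mul (continuous_finset_sum _ fun i _ => continuous_apply i)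

lemma exists_min (τ : Fin m → ℝ) (cF : ℝ) (I : Fin nφ → Fin m → ℝ) (π : Fin nφ → ℝ) :
    ∃ p0 ∈ stdSimplex ℝ (Fin m), ∀ p ∈ stdSimplex ℝ (Fin m),
      Hf τ cF I π p0 ≤ Hf τ cF I π p := by
  obtain ⟨p0, hp0, hmin⟩ := (isCompact_stdSimplex ℝ (Fin m)).exists_isMinOn
    ⟨Pi.single (Classical.arbitrary (Fin m)) 1, single_mem_stdSimplex ℝ _⟩
    (cont_Hf τ cF I π).continuousOn
  exact ⟨p0, hp0, fun p hp => hmin hp⟩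

/-- Core separation lemma: for a minimizer `p0` of `Hf` over the simplex, there is a
profile `q` of attacker mixed strategies against which every defender pure strategy
costs at least the optimal value. -/
lemma exists_q (τ : Fin m → ℝ) (cF : ℝ) (I : Fin nφ → Fin m → ℝ) (π : Fin nφ → ℝ)
    {p0 : Fin m → ℝ} (hp0 : p0 ∈ stdSimplex ℝ (Fin m))
    (hmin : ∀ p ∈ stdSimplex ℝ (Fin m), Hf τ cF I π p0 ≤ Hf τ cF I π p) :
    ∃ q : Fin nφ → Fin m → ℝ, (∀ φ, q φ ∈ stdSimplex ℝ (Fin m)) ∧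
      ∀ i, Hf τ cF I π p0 ≤ Dq τ cF I π q i := by
  classical
  by_contra hcon
  push_neg at hcon
  set v : ℝ := Hf τ cF I π p0 with hv
  set Q : Set (Fin nφ → Fin m → ℝ) := Set.univ.pi (fun _ => stdSimplex ℝ (Fin m)) with hQ
  set Df : (Fin nφ → Fin m → ℝ) → (Fin m → ℝ) := fun q => Dq τ cF I π q with hDf
  have hQmem : ∀ {q}, q ∈ Q ↔ ∀ φ, q φ ∈ stdSimplex ℝ (Fin m) := by
    intro q
    constructor
    · intro h φ; exact h φ (Set.mem_univ φ)
    · intro h φ _; exact h φ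
  -- continuity of Df
  have hcont : Continuous Df := by
    refine continuous_pi fun i => Continuous.add continuous_const ?_
    refine continuous_finset_sum _ fun φ _ => Continuous.mul continuous_const ?_
    exact continuous_finset_sum _ fun j _ =>
      continuous_const.mul ((continuous_apply j).comp (continuous_apply φ))
  -- the compact convex set s and closed convex set t
  have hsc : IsCompact (Df '' Q) :=
    (isCompact_univ_pi fun _ => isCompact_stdSimplex ℝ (Fin m)).image hcont
  have hsconv : Convex ℝ (Df '' Q) := by
    rintro x ⟨q1, hq1, rfl⟩ y ⟨q2, hq2, rfl⟩ c d hc hd hcd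
    refine ⟨c • q1 + d • q2, ?_, ?_⟩
    · intro φ _
      exact convex_stdSimplex ℝ (Fin m) (hq1 φ (Set.mem_univ φ)) (hq2 φ (Set.mem_univ φ)) hc hd hcd
    · funext i
      simp only [hDf, Dq, Pi.add_apply, Pi.smul_apply, smul_eq_mul]
      have hker : ∀ φ, (∑ j, (if j ≤ i then I φ j else 0) * (c * q1 φ j + d * q2 φ j))
          = c * (∑ j, (if j ≤ i then I φ j else 0) * q1 φ j)
            + d * (∑ j, (if j ≤ i then I φ j else 0) * q2 φ j) := by
        intro φ
        rw [Finset.mul_sum, Finset.mul_sum, ← Finset.sum_add_distrib]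
        exact Finset.sum_congr rfl fun j _ => by ring
      simp_rw [hker, mul_add]
      rw [Finset.sum_add_distrib]
      have h1 : ∀ φ, π φ * (c * ∑ j, (if j ≤ i then I φ j else 0) * q1 φ j)
          = c * (π φ * ∑ j, (if j ≤ i then I φ j else 0) * q1 φ j) := fun φ => by ring
      have h2 : ∀ φ, π φ * (d * ∑ j, (if j ≤ i then I φ j else 0) * q2 φ j)
          = d * (π φ * ∑ j, (if j ≤ i then I φ j else 0) * q2 φ j) := fun φ => by ring
      simp_rw [h1, h2]
      rw [← Finset.mul_sum, ← Finset.mul_sum]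
      linear_combination (-(cF / τ i)) * hcd
  have htclosed : IsClosed (Set.univ.pi fun _ : Fin m => Set.Ici v) :=
    isClosed_set_pi fun i _ => isClosed_Ici
  have htconv : Convex ℝ (Set.univ.pi fun _ : Fin m => Set.Ici v) :=
    convex_pi fun i _ => convex_Ici v
  have hdisj : Disjoint (Df '' Q) (Set.univ.pi fun _ : Fin m => Set.Ici v) := by
    rw [Set.disjoint_left]
    rintro y ⟨q, hq, rfl⟩ hyt
    obtain ⟨i, hi⟩ := hcon q (hQmem.mp hq)
    exact absurd (hyt i (Set.mem_univ i)) (not_le.mpr hi)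
  obtain ⟨L, u, w, hfu, huw, hwt⟩ :=
    geometric_hahn_banach_compact_closed hsconv hsc htconv htclosed hdisj
  -- the separating functional as a vector
  set pv : Fin m → ℝ := fun i => L (Pi.single i 1) with hpv
  have hpvi : ∀ i : Fin m, L (Pi.single i (1:ℝ)) = pv i := fun _ => rfl
  have hrep : ∀ y : Fin m → ℝ, L y = ∑ i, y i * pv i := by
    intro y
    have hsingle : ∀ i : Fin m, (fun j => if i = j then (1:ℝ) else 0) = Pi.single i (1:ℝ) := by
      intro i; funext j; simp [Pi.single_apply, eq_comm]
    conv_lhs => rw [pi_eq_sum_univ y]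
    rw [map_sum]
    refine Finset.sum_congr rfl fun i _ => ?_
    rw [hsingle i, L.map_smul, smul_eq_mul, hpvi i]
  have hconstmem : (fun _ : Fin m => v) ∈ (Set.univ.pi fun _ : Fin m => Set.Ici v) :=
    fun i _ => le_refl v
  have hwconst : w < L (fun _ => v) := hwt _ hconstmem
  -- nonnegativity of pv
  have hpv0 : ∀ i, 0 ≤ pv i := by
    intro i
    by_contra hneg
    push_neg at hneg
    set c : ℝ := (L (fun _ => v) - w + 1) / (-pv i) with hcdef
    have hc : 0 ≤ c := by
      apply div_nonneg _ (by linarith)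
      linarith
    have hmem : ((fun _ : Fin m => v) + c • (Pi.single i (1:ℝ) : Fin m → ℝ))
        ∈ (Set.univ.pi fun _ : Fin m => Set.Ici v) := by
      intro k _
      simp only [Pi.add_apply, Pi.smul_apply, smul_eq_mul, Set.mem_Ici]
      have h01 : (0:ℝ) ≤ (Pi.single i (1:ℝ) : Fin m → ℝ) k := by
        rcases eq_or_ne k i with rfl | hk
        · simp
        · simp [Pi.single_apply, hk]
      nlinarith
    have hlt := hwt _ hmem
    rw [map_add, L.map_smul, smul_eq_mul, hpvi i] at hlt
    have hne0 : pv i ≠ 0 := ne_of_lt hneg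
    have hcpv : c * pv i = -(L (fun _ => v) - w + 1) := by
      rw [hcdef, div_mul_eq_mul_div, mul_div_assoc, div_neg, div_self hne0]
      ring
    rw [hcpv] at hlt
    linarith
  -- positivity of total mass
  set T : ℝ := ∑ i, pv i with hT
  have hsne : ∃ y, y ∈ Df '' Q :=
    ⟨_, ⟨(fun _ => Pi.single (Classical.arbitrary (Fin m)) 1),
      hQmem.mpr fun φ => single_mem_stdSimplex ℝ _, rfl⟩⟩
  have hTpos : 0 < T := by
    rcases lt_or_ge 0 T with h | h
    · exact h
    · exfalso
      have hT0 : (∑ i, pv i) = 0 := le_antisymm (hT ▸ h) (Finset.sum_nonneg fun i _ => hpv0 i)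
      have hall : ∀ i ∈ (Finset.univ : Finset (Fin m)), pv i = 0 :=
        (Finset.sum_eq_zero_iff_of_nonneg (fun i _ => hpv0 i)).mp hT0
      obtain ⟨y, hy⟩ := hsne
      have h1 : L y = 0 := by
        rw [hrep]
        exact Finset.sum_eq_zero fun i _ => by rw [hall i (Finset.mem_univ i), mul_zero]
      have h2 : L (fun _ => v) = 0 := by
        rw [hrep]
        exact Finset.sum_eq_zero fun i _ => by rw [hall i (Finset.mem_univ i), mul_zero]
      have := hfu y hy
      linarith
  -- the normalized strategy
  set ph : Fin m → ℝ := fun i => pv i / T with hph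
  have hphmem : ph ∈ stdSimplex ℝ (Fin m) := by
    constructor
    · intro i; exact div_nonneg (hpv0 i) hTpos.le
    · show (∑ i, pv i / T) = 1
      rw [← Finset.sum_div, ← hT]
      exact div_self (ne_of_gt hTpos)
  -- best-response attack against ph
  have hex : ∀ φ : Fin nφ, ∃ j0 : Fin m, ∀ j : Fin m,
      I φ j * tailP ph j ≤ I φ j0 * tailP ph j0 := by
    intro φ
    obtain ⟨j0, _, hj0⟩ := Finset.exists_max_image Finset.univ
      (fun j => I φ j * tailP ph j) Finset.univ_nonempty
    exact ⟨j0, fun j => hj0 j (Finset.mem_univ j)⟩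
  choose jsel hjsel using hex
  set qh : Fin nφ → Fin m → ℝ := fun φ => Pi.single (jsel φ) 1 with hqh
  have hqhQ : qh ∈ Q := hQmem.mpr fun φ => single_mem_stdSimplex ℝ _
  -- value computation
  have hval : ∑ i, ph i * Dq τ cF I π qh i = Hf τ cF I π ph := by
    rw [sum_pD]
    unfold Hf
    congr 1
    refine Finset.sum_congr rfl fun φ _ => ?_
    congr 1
    rw [dot_upsilon]
    simp only [hqh]
    rw [sum_single_mul (fun j => I φ j * tailP ph j) (jsel φ)]
    exact (Vm_eq_of (jsel φ) (hjsel φ)).symm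
  -- the contradiction
  have hlt1 : L (Df qh) < u := hfu _ ⟨qh, hqhQ, rfl⟩
  have hwv : w < v * T := by
    have hLc : L (fun _ => v) = v * T := by
      rw [hrep, hT, Finset.mul_sum]
    linarith
  have hsum : ∑ i, pv i * Dq τ cF I π qh i < v * T := by
    have hLD : L (Df qh) = ∑ i, pv i * Dq τ cF I π qh i := by
      rw [hrep]
      exact Finset.sum_congr rfl fun i _ => mul_comm _ _
    linarith
  have hfinal : ∑ i, ph i * Dq τ cF I π qh i < v := by
    have heq : ∑ i, ph i * Dq τ cF I π qh i = (∑ i, pv i * Dq τ cF I π qh i) / T := by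
      rw [Finset.sum_div]
      refine Finset.sum_congr rfl fun i _ => ?_
      show pv i / T * Dq τ cF I π qh i = _
      ring
    rw [heq, div_lt_iff₀ hTpos]
    exact hsum
  rw [hval] at hfinal
  exact absurd (hmin ph hphmem) (not_le.mpr hfinal)

end WithNe

/-- Forward direction of Theorem 1. -/
lemma forward (m nφ : ℕ) (hm : 2 ≤ m) (τ : Fin m → ℝ) (hτmono : StrictMono τ)
    (cF : ℝ) (hcF : 0 < cF) (π : Fin nφ → ℝ) (hπ0 : ∀ φ, 0 ≤ π φ) (hπ1 : ∑ φ, π φ = 1)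
    (I : Fin nφ → Fin m → ℝ) (a b z : Fin m)
    (hav : (a:ℕ) = m - 2) (hbv : (b:ℕ) = m - 1) (hzv : (z:ℕ) = 0)
    (hτ1 : 1 ≤ τ z)
    (hI : ∀ φ, (0 < I φ z ∧ StrictMono (I φ)) ∨ (∀ j, I φ j = 0))
    (hex : ∃ (p : Fin m → ℝ) (q : Fin nφ → Fin m → ℝ),
      IsBNE τ cF I π p q ∧ ∀ i, p i < 1) :
    cF / τ a ≤ cF / τ b + ∑ φ, π φ * I φ b := by
  classical
  haveI : NeZero m := ⟨by omega⟩
  obtain ⟨p, q, ⟨hpP, hqP, hDef, hAtt⟩, hlt⟩ := hex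
  have hzle : ∀ j : Fin m, z ≤ j := fun j => by rw [Fin.le_def, hzv]; omega
  have hjb : ∀ j : Fin m, j ≤ b := fun j => by
    have hj := j.isLt; rw [Fin.le_def, hbv]; omega
  have hτpos : ∀ i, 0 < τ i :=
    fun i => lt_of_lt_of_le one_pos (le_trans hτ1 (hτmono.monotone (hzle i)))
  have hI0 : ∀ φ j, 0 ≤ I φ j := by
    intro φ j
    rcases hI φ with ⟨h0, hmono⟩ | hzero
    · exact le_of_lt (lt_of_lt_of_le h0 (hmono.monotone (hzle j)))
    · rw [hzero j]
  have hIb : ∀ φ j, I φ j ≤ I φ b := by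
    intro φ j
    rcases hI φ with ⟨_, hmono⟩ | hzero
    · exact hmono.monotone (hjb j)
    · rw [hzero j, hzero b]
  have hq1 : ∀ φ, ∑ j, q φ j = 1 := fun φ => (hqP φ).2
  -- defender optimality against the pure strategy b
  have h1 : ∑ i, p i * Dq τ cF I π q i ≤ Dq τ cF I π q b := by
    have h := hDef (Pi.single b 1) (isProbVec_single b)
    rw [avg_cost_eq τ cF I hπ1 p hq1, avg_cost_eq τ cF I hπ1 _ hq1] at h
    rwa [sum_single_mul (fun i => Dq τ cF I π q i) b] at h
  -- the cost of pure strategy b is at most c_F/τ_b + S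
  have h2 : Dq τ cF I π q b ≤ cF / τ b + ∑ φ, π φ * I φ b := by
    unfold Dq
    have hφb : ∀ φ, (∑ j, (if j ≤ b then I φ j else 0) * q φ j) ≤ I φ b := by
      intro φ
      calc (∑ j, (if j ≤ b then I φ j else 0) * q φ j) ≤ ∑ j, I φ b * q φ j := by
            refine Finset.sum_le_sum fun j _ => ?_
            rw [if_pos (hjb j)]
            exact mul_le_mul_of_nonneg_right (hIb φ j) ((hqP φ).1 j)
        _ = I φ b := by rw [← Finset.mul_sum, hq1 φ, mul_one]
    exact add_le_add_right (Finset.sum_le_sum fun φ _ =>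
      mul_le_mul_of_nonneg_left (hφb φ) (hπ0 φ)) _
  -- attacker optimality: attacking at b is no better than q φ
  have htb : tailP p b = p b := by
    rw [tailP]
    have hfil : Finset.univ.filter (fun i : Fin m => b ≤ i) = {b} := by
      ext i
      simp only [Finset.mem_filter, Finset.mem_univ, true_and, Finset.mem_singleton]
      constructor
      · intro h; exact le_antisymm (hjb i) h
      · rintro rfl; exact le_refl _
    rw [hfil, Finset.sum_singleton]
  have h3 : ∀ φ, I φ b * p b ≤ p ⬝ᵥ (UpsilonMat I φ *ᵥ q φ) := by
    intro φ
    have h := hAtt φ (Pi.single b 1) (isProbVec_single b)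
    rw [dot_upsilon I φ p (Pi.single b 1),
      sum_single_mul (fun j => I φ j * tailP p j) b, htb] at h
    exact h
  -- lower bound on the defender's equilibrium cost
  have h4 : (∑ i, p i * (cF / τ i)) + (∑ φ, π φ * I φ b) * p b
      ≤ ∑ i, p i * Dq τ cF I π q i := by
    rw [sum_pD]
    refine add_le_add_right ?_ _
    rw [Finset.sum_mul]
    refine Finset.sum_le_sum fun φ _ => ?_
    rw [mul_assoc]
    exact mul_le_mul_of_nonneg_left (h3 φ) (hπ0 φ)
  -- lower bound on the false-alarm cost
  have h5 : p b * (cF / τ b) + (1 - p b) * (cF / τ a) ≤ ∑ i, p i * (cF / τ i) := by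
    have hsplit := Finset.add_sum_erase Finset.univ (fun i => p i * (cF / τ i))
      (Finset.mem_univ b)
    have hsum_erase : ∑ i ∈ Finset.univ.erase b, p i = 1 - p b := by
      have h := Finset.add_sum_erase Finset.univ p (Finset.mem_univ b)
      have h2 := hpP.2
      linarith
    have hterm : ∀ i ∈ Finset.univ.erase b, p i * (cF / τ a) ≤ p i * (cF / τ i) := by
      intro i hi
      have hine : i ≠ b := (Finset.mem_erase.mp hi).1
      have hiv : (i:ℕ) ≠ m - 1 := by
        intro h
        exact hine (Fin.ext (by rw [h, hbv]))
      have hia : i ≤ a := by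
        have := i.isLt; rw [Fin.le_def, hav]; omega
      have hdiv : cF / τ a ≤ cF / τ i :=
        div_le_div_of_nonneg_left hcF.le (hτpos i) (hτmono.monotone hia)
      exact mul_le_mul_of_nonneg_left hdiv (hpP.1 i)
    have hge : (1 - p b) * (cF / τ a) ≤ ∑ i ∈ Finset.univ.erase b, p i * (cF / τ i) := by
      calc (1 - p b) * (cF / τ a) = ∑ i ∈ Finset.univ.erase b, p i * (cF / τ a) := by
            rw [← Finset.sum_mul, hsum_erase]
        _ ≤ ∑ i ∈ Finset.univ.erase b, p i * (cF / τ i) := Finset.sum_le_sum hterm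
    calc p b * (cF / τ b) + (1 - p b) * (cF / τ a)
        ≤ p b * (cF / τ b) + ∑ i ∈ Finset.univ.erase b, p i * (cF / τ i) := by linarith
      _ = ∑ i, p i * (cF / τ i) := hsplit
  -- combine
  have hpb : p b < 1 := hlt b
  have key : (1 - p b) * (cF / τ a) ≤ (1 - p b) * (cF / τ b + ∑ φ, π φ * I φ b) := by
    nlinarith [h1, h2, h4, h5]
  have hpos : (0:ℝ) < 1 - p b := by linarith
  exact (mul_le_mul_iff_right₀ hpos).mp key


set_option maxHeartbeats 1600000 in
/-- Backward direction of Theorem 1. -/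
lemma backward (m nφ : ℕ) (hm : 2 ≤ m) (τ : Fin m → ℝ) (hτmono : StrictMono τ)
    (cF : ℝ) (hcF : 0 < cF) (π : Fin nφ → ℝ) (hπ0 : ∀ φ, 0 ≤ π φ) (hπ1 : ∑ φ, π φ = 1)
    (I : Fin nφ → Fin m → ℝ) (a b z : Fin m)
    (hav : (a:ℕ) = m - 2) (hbv : (b:ℕ) = m - 1) (hzv : (z:ℕ) = 0)
    (hτ1 : 1 ≤ τ z)
    (hI : ∀ φ, (0 < I φ z ∧ StrictMono (I φ)) ∨ (∀ j, I φ j = 0))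
    (hcond : cF / τ a ≤ cF / τ b + ∑ φ, π φ * I φ b) :
    ∃ (p : Fin m → ℝ) (q : Fin nφ → Fin m → ℝ), IsBNE τ cF I π p q ∧ ∀ i, p i < 1 := by
  classical
  haveI : NeZero m := ⟨by omega⟩
  -- basic facts
  have hzle : ∀ j : Fin m, z ≤ j := fun j => by rw [Fin.le_def, hzv]; omega
  have hjb : ∀ j : Fin m, j ≤ b := fun j => by
    have hj := j.isLt; rw [Fin.le_def, hbv]; omega
  have hτpos : ∀ i, 0 < τ i :=
    fun i => lt_of_lt_of_le one_pos (le_trans hτ1 (hτmono.monotone (hzle i)))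
  have hI0 : ∀ φ j, 0 ≤ I φ j := by
    intro φ j
    rcases hI φ with ⟨h0, hmono⟩ | hzero
    · exact le_of_lt (lt_of_lt_of_le h0 (hmono.monotone (hzle j)))
    · rw [hzero j]
  have hab : a < b := by rw [Fin.lt_def, hav, hbv]; omega
  have hne_ab : a ≠ b := ne_of_lt hab
  have hcase : ∀ j : Fin m, j = b ∨ j ≤ a := by
    intro j
    have hj := j.isLt
    rcases eq_or_ne j b with h | h
    · exact Or.inl h
    · refine Or.inr ?_
      have : (j:ℕ) ≠ m - 1 := fun hc => h (Fin.ext (by rw [hc, hbv]))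
      rw [Fin.le_def, hav]; omega
  have hΔ : cF / τ b < cF / τ a := div_lt_div_of_pos_left hcF (hτpos a) (hτmono hab)
  have hS : 0 < ∑ φ, π φ * I φ b := by linarith
  -- the set of active types with positive prior
  set A : Finset (Fin nφ) := Finset.univ.filter (fun φ => 0 < π φ * I φ b) with hA
  have hAne : A.Nonempty := by
    by_contra hno
    rw [Finset.not_nonempty_iff_eq_empty] at hno
    have : ∀ φ : Fin nφ, π φ * I φ b ≤ 0 := by
      intro φ
      by_contra hc
      push_neg at hc
      have : φ ∈ A := by rw [hA, Finset.mem_filter]; exact ⟨Finset.mem_univ φ, hc⟩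
      rw [hno] at this
      exact absurd this (Finset.notMem_empty φ)
    have := Finset.sum_nonpos (fun φ (_ : φ ∈ Finset.univ) => this φ)
    linarith
  have hmemA : ∀ φ ∈ A, 0 < π φ ∧ 0 < I φ z ∧ StrictMono (I φ) := by
    intro φ hφ
    rw [hA, Finset.mem_filter] at hφ
    have h2 := hφ.2
    have hπφ : 0 < π φ := by
      rcases eq_or_lt_of_le (hπ0 φ) with h | h
      · exfalso; rw [← h, zero_mul] at h2; exact lt_irrefl 0 h2
      · exact h
    have hIbφ : 0 < I φ b := by nlinarith [hI0 φ b]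
    rcases hI φ with ⟨h0, hmono⟩ | hzero
    · exact ⟨hπφ, h0, hmono⟩
    · exfalso; rw [hzero b] at hIbφ; exact lt_irrefl 0 hIbφ
  have hIbposA : ∀ φ ∈ A, 0 < I φ b := by
    intro φ hφ
    obtain ⟨_, h0, hmono⟩ := hmemA φ hφ
    exact lt_of_lt_of_le h0 (hmono.monotone (hzle b))
  -- the key mixing weight
  set t0 : ℝ := A.inf' hAne (fun φ => 1 - I φ a / I φ b) with ht0
  have ht0le : ∀ φ ∈ A, t0 ≤ 1 - I φ a / I φ b := fun φ hφ => by
    rw [ht0]; exact Finset.inf'_le _ hφ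
  have ht0pos : 0 < t0 := by
    rw [ht0, Finset.lt_inf'_iff]
    intro φ hφ
    obtain ⟨_, h0, hmono⟩ := hmemA φ hφ
    have : I φ a / I φ b < 1 := (div_lt_one (hIbposA φ hφ)).mpr (hmono hab)
    linarith
  have ht0lt1 : t0 < 1 := by
    obtain ⟨φ0, hφ0⟩ := hAne
    obtain ⟨_, h0, hmono⟩ := hmemA φ0 hφ0
    have hIa : 0 < I φ0 a := lt_of_lt_of_le h0 (hmono.monotone (hzle a))
    have : 0 < I φ0 a / I φ0 b := div_pos hIa (hIbposA φ0 hφ0)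
    have := ht0le φ0 hφ0
    linarith
  -- a minimizer of the defender's worst-case cost
  obtain ⟨p0, hp0mem, hp0min⟩ := exists_min τ cF I π
  -- upgrade it to a fully mixed minimizer
  obtain ⟨ps, hpsmem, hpslt, hpsmin⟩ :
      ∃ ps ∈ stdSimplex ℝ (Fin m), (∀ i, ps i < 1) ∧
        ∀ p ∈ stdSimplex ℝ (Fin m), Hf τ cF I π ps ≤ Hf τ cF I π p := by
    by_cases hgood : ∀ i, p0 i < 1
    · exact ⟨p0, hp0mem, hgood, hp0min⟩
    push_neg at hgood
    obtain ⟨i0, hi0⟩ := hgood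
    -- then p0 is the pure strategy i0
    have hp0eq : p0 = Pi.single i0 1 := by
      have hsum := hp0mem.2
      have hnn := hp0mem.1
      have hadd := Finset.add_sum_erase Finset.univ p0 (Finset.mem_univ i0)
      have hrest : ∑ k ∈ Finset.univ.erase i0, p0 k = 1 - p0 i0 := by linarith
      have hzero : ∀ k ∈ Finset.univ.erase i0, p0 k = 0 := by
        have h1 : ∑ k ∈ Finset.univ.erase i0, p0 k ≤ 0 := by rw [hrest]; linarith
        have h2 : (0:ℝ) ≤ ∑ k ∈ Finset.univ.erase i0, p0 k :=
          Finset.sum_nonneg (fun k _ => hnn k)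
        have h3 : ∑ k ∈ Finset.univ.erase i0, p0 k = 0 := le_antisymm h1 h2
        exact (Finset.sum_eq_zero_iff_of_nonneg (fun k _ => hnn k)).mp h3
      have hp0i0 : p0 i0 = 1 := by
        have h0 : ∑ k ∈ Finset.univ.erase i0, p0 k = 0 := Finset.sum_eq_zero hzero
        linarith
      funext k
      rcases eq_or_ne k i0 with rfl | hk
      · rw [hp0i0]; simp
      · rw [hzero k (Finset.mem_erase.mpr ⟨hk, Finset.mem_univ k⟩)]
        simp [Pi.single_apply, hk]
    -- value of a pure strategy
    have hHsingle : ∀ i0 : Fin m, (∀ φ, π φ * Vm I φ (Pi.single i0 1) = π φ * I φ i0) →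
        Hf τ cF I π (Pi.single i0 1) = cF / τ i0 + ∑ φ, π φ * I φ i0 := by
      intro i1 hVs
      unfold Hf
      rw [sum_single_mul (fun i => cF / τ i) i1]
      congr 1
      exact Finset.sum_congr rfl fun φ _ => hVs φ
    have hVsingle : ∀ (i1 : Fin m) (φ : Fin nφ),
        π φ * Vm I φ (Pi.single i1 1) = π φ * I φ i1 := by
      intro i1 φ
      rcases eq_or_ne (π φ) 0 with hπz | hπz
      · rw [hπz, zero_mul, zero_mul]
      rcases hI φ with ⟨h0, hmono⟩ | hzero
      · congr 1
        have hub : ∀ j, I φ j * tailP (Pi.single i1 1) j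
            ≤ I φ i1 * tailP (Pi.single i1 1) i1 := by
          intro j
          rw [tailP_single, tailP_single, if_pos (le_refl i1)]
          by_cases hji : j ≤ i1
          · rw [if_pos hji, mul_one, mul_one]; exact hmono.monotone hji
          · rw [if_neg hji, mul_zero, mul_one]
            exact le_of_lt (lt_of_lt_of_le h0 (hmono.monotone (hzle i1)))
        rw [Vm_eq_of i1 hub, tailP_single, if_pos (le_refl i1), mul_one]
      · have hV0 : Vm I φ (Pi.single i1 1) = 0 := by
          have hub : ∀ j, I φ j * tailP (Pi.single i1 1) j
              ≤ I φ b * tailP (Pi.single i1 1) b := by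
            intro j; rw [hzero j, hzero b, zero_mul, zero_mul]
          rw [Vm_eq_of b hub, hzero b, zero_mul]
        rw [hV0, hzero i1]
    rcases hcase i0 with hi0b | hia
    · -- i0 = b : move mass down to a
      rw [hi0b] at hp0eq
      set ph : Fin m → ℝ := fun k => t0 * (Pi.single a (1:ℝ) : Fin m → ℝ) k
        + (1 - t0) * (Pi.single b (1:ℝ) : Fin m → ℝ) k with hph
      have hphmem : ph ∈ stdSimplex ℝ (Fin m) :=
        comb_mem a b ht0pos.le (by linarith) (by ring)
      have hbna : ¬ (b ≤ a) := not_le.mpr hab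
      have htail : ∀ j, tailP ph j = t0 * (if j ≤ a then (1:ℝ) else 0) + (1 - t0) := by
        intro j
        rw [hph, comb_tail, if_pos (hjb j), mul_one]
      have hVph : ∀ φ, π φ * Vm I φ ph = π φ * ((1 - t0) * I φ b) := by
        intro φ
        rcases eq_or_ne (π φ) 0 with hπz | hπz
        · rw [hπz, zero_mul, zero_mul]
        rcases hI φ with ⟨h0, hmono⟩ | hzero
        · -- active type with positive prior : φ ∈ A
          have hπφ : 0 < π φ := lt_of_le_of_ne (hπ0 φ) (Ne.symm hπz)
          have hIbφ : 0 < I φ b := lt_of_lt_of_le h0 (hmono.monotone (hzle b))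
          have hφA : φ ∈ A := by
            rw [hA, Finset.mem_filter]
            exact ⟨Finset.mem_univ φ, mul_pos hπφ hIbφ⟩
          have hrat : I φ a ≤ (1 - t0) * I φ b := by
            have := ht0le φ hφA
            have h2 : I φ a / I φ b ≤ 1 - t0 := by linarith
            calc I φ a = I φ a / I φ b * I φ b := by field_simp
              _ ≤ (1 - t0) * I φ b := mul_le_mul_of_nonneg_right h2 hIbφ.le
          have hub : ∀ j, I φ j * tailP ph j ≤ I φ b * tailP ph b := by
            intro j
            rw [htail, htail, if_neg hbna, mul_zero, zero_add]
            rcases hcase j with hjb2 | hja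
            · rw [hjb2, if_neg hbna, mul_zero, zero_add]
            · rw [if_pos hja, mul_one, mul_add]
              have h1 : I φ j ≤ I φ a := hmono.monotone hja
              nlinarith [h1, hrat]
          rw [Vm_eq_of b hub, htail, if_neg hbna, mul_zero, zero_add]
          ring_nf
        · have hV0 : Vm I φ ph = 0 := by
            have hub : ∀ j, I φ j * tailP ph j ≤ I φ b * tailP ph b := by
              intro j; rw [hzero j, hzero b, zero_mul, zero_mul]
            rw [Vm_eq_of b hub, hzero b, zero_mul]
          rw [hV0, hzero b]
          ring
      have hc1 : ∑ k, ph k * (cF / τ k) = t0 * (cF / τ a) + (1 - t0) * (cF / τ b) := by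
        simp only [hph]
        exact comb_sum t0 (1 - t0) a b (fun i => cF / τ i)
      have hsv : ∑ φ, π φ * Vm I φ ph = (1 - t0) * ∑ φ, π φ * I φ b := by
        rw [Finset.mul_sum]
        rw [Finset.sum_congr rfl fun φ _ => hVph φ]
        exact Finset.sum_congr rfl fun φ _ => by ring
      have hHph : Hf τ cF I π ph
          = t0 * (cF / τ a) + (1 - t0) * (cF / τ b)
            + (1 - t0) * ∑ φ, π φ * I φ b := by
        unfold Hf
        rw [hc1, hsv, add_assoc]
      have hHb : Hf τ cF I π (Pi.single b 1) = cF / τ b + ∑ φ, π φ * I φ b :=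
        hHsingle b (hVsingle b)
      have hle : Hf τ cF I π ph ≤ Hf τ cF I π (Pi.single b 1) := by
        rw [hHph, hHb]
        have hmul := mul_le_mul_of_nonneg_left hcond ht0pos.le
        nlinarith
      refine ⟨ph, hphmem, ?_, ?_⟩
      · intro i
        rcases eq_or_ne i a with rfl | hia2
        · have : ph i = t0 := by
            rw [hph]
            simp [Pi.single_apply, hne_ab, Ne.symm hne_ab]
          rw [this]; exact ht0lt1
        rcases eq_or_ne i b with rfl | hib2
        · have : ph i = 1 - t0 := by
            rw [hph]
            simp [Pi.single_apply, hne_ab, Ne.symm hne_ab]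
          rw [this]; linarith
        · have : ph i = 0 := by
            rw [hph]
            simp [Pi.single_apply, hia2, hib2]
          rw [this]; linarith
      · intro p hp
        refine le_trans hle ?_
        rw [← hp0eq]
        exact hp0min p hp
    · -- i0 ≤ a : contradiction, moving mass to b strictly improves
      exfalso
      have hi0b : i0 < b := lt_of_le_of_lt hia hab
      set s0 : ℝ := A.inf' hAne (fun φ => I φ i0 / I φ b) with hs0
      have hs0le : ∀ φ ∈ A, s0 ≤ I φ i0 / I φ b := fun φ hφ => by
        rw [hs0]; exact Finset.inf'_le _ hφ
      have hs0pos : 0 < s0 := by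
        rw [hs0, Finset.lt_inf'_iff]
        intro φ hφ
        obtain ⟨_, h0, hmono⟩ := hmemA φ hφ
        exact div_pos (lt_of_lt_of_le h0 (hmono.monotone (hzle i0))) (hIbposA φ hφ)
      have hs0lt1 : s0 < 1 := by
        obtain ⟨φ0, hφ0⟩ := hAne
        obtain ⟨_, h0, hmono⟩ := hmemA φ0 hφ0
        have : I φ0 i0 / I φ0 b < 1 := (div_lt_one (hIbposA φ0 hφ0)).mpr (hmono hi0b)
        have := hs0le φ0 hφ0
        linarith
      set pp : Fin m → ℝ := fun k => (1 - s0) * (Pi.single i0 (1:ℝ) : Fin m → ℝ) k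
        + s0 * (Pi.single b (1:ℝ) : Fin m → ℝ) k with hpp
      have hppmem : pp ∈ stdSimplex ℝ (Fin m) :=
        comb_mem i0 b (by linarith) hs0pos.le (by ring)
      have htail : ∀ j, tailP pp j = (1 - s0) * (if j ≤ i0 then (1:ℝ) else 0) + s0 := by
        intro j
        rw [hpp, comb_tail, if_pos (hjb j), mul_one]
      have hVpp : ∀ φ, π φ * Vm I φ pp = π φ * I φ i0 := by
        intro φ
        rcases eq_or_ne (π φ) 0 with hπz | hπz
        · rw [hπz, zero_mul, zero_mul]
        rcases hI φ with ⟨h0, hmono⟩ | hzero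
        · have hπφ : 0 < π φ := lt_of_le_of_ne (hπ0 φ) (Ne.symm hπz)
          have hIbφ : 0 < I φ b := lt_of_lt_of_le h0 (hmono.monotone (hzle b))
          have hφA : φ ∈ A := by
            rw [hA, Finset.mem_filter]
            exact ⟨Finset.mem_univ φ, mul_pos hπφ hIbφ⟩
          have hrat : s0 * I φ b ≤ I φ i0 := by
            have h2 := hs0le φ hφA
            calc s0 * I φ b ≤ I φ i0 / I φ b * I φ b :=
                  mul_le_mul_of_nonneg_right h2 hIbφ.le
              _ = I φ i0 := by field_simp
          have hub : ∀ j, I φ j * tailP pp j ≤ I φ i0 * tailP pp i0 := by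
            intro j
            rw [htail, htail, if_pos (le_refl i0), mul_one]
            by_cases hji : j ≤ i0
            · rw [if_pos hji, mul_one]
              have := hmono.monotone hji
              nlinarith
            · rw [if_neg hji, mul_zero, zero_add]
              have h1 : I φ j ≤ I φ b := hmono.monotone (hjb j)
              have h2 : I φ j * s0 ≤ I φ b * s0 :=
                mul_le_mul_of_nonneg_right h1 hs0pos.le
              have h3 : (1 - s0) + s0 = 1 := by ring
              nlinarith
          rw [Vm_eq_of i0 hub, htail, if_pos (le_refl i0)]
          have h5 : (1 - s0) * 1 + s0 = 1 := by ring
          rw [h5, mul_one]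
        · have hV0 : Vm I φ pp = 0 := by
            have hub : ∀ j, I φ j * tailP pp j ≤ I φ b * tailP pp b := by
              intro j; rw [hzero j, hzero b, zero_mul, zero_mul]
            rw [Vm_eq_of b hub, hzero b, zero_mul]
          rw [hV0, hzero i0]
      have hc1 : ∑ k, pp k * (cF / τ k) = (1 - s0) * (cF / τ i0) + s0 * (cF / τ b) := by
        simp only [hpp]
        exact comb_sum (1 - s0) s0 i0 b (fun i => cF / τ i)
      have hHpp : Hf τ cF I π pp
          = (1 - s0) * (cF / τ i0) + s0 * (cF / τ b) + ∑ φ, π φ * I φ i0 := by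
        unfold Hf
        rw [hc1]
        congr 1
        exact Finset.sum_congr rfl fun φ _ => hVpp φ
      have hHi0 : Hf τ cF I π (Pi.single i0 1) = cF / τ i0 + ∑ φ, π φ * I φ i0 :=
        hHsingle i0 (hVsingle i0)
      have hstrict : Hf τ cF I π pp < Hf τ cF I π (Pi.single i0 1) := by
        rw [hHpp, hHi0]
        have hτlt : cF / τ b < cF / τ i0 :=
          div_lt_div_of_pos_left hcF (hτpos i0) (hτmono hi0b)
        nlinarith
      have := hp0min pp hppmem
      rw [hp0eq] at this
      linarith
  -- the equilibrium attack profile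
  obtain ⟨qstar, hqstarS, hqstarD⟩ := exists_q τ cF I π hpsmem hpsmin
  have hex2 : ∀ φ : Fin nφ, ∃ j0 : Fin m, ∀ j : Fin m,
      I φ j * tailP ps j ≤ I φ j0 * tailP ps j0 := by
    intro φ
    obtain ⟨j0, _, hj0⟩ := Finset.exists_max_image Finset.univ
      (fun j => I φ j * tailP ps j) Finset.univ_nonempty
    exact ⟨j0, fun j => hj0 j (Finset.mem_univ j)⟩
  choose jsel hjsel using hex2
  set qq : Fin nφ → Fin m → ℝ :=
    fun φ => if 0 < π φ then qstar φ else Pi.single (jsel φ) 1 with hqq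
  have hqqP : ∀ φ, IsProbVec (qq φ) := by
    intro φ
    rw [hqq]
    by_cases h : 0 < π φ
    · simp only [if_pos h]
      exact (probVec_iff (qstar φ)).mp (hqstarS φ)
    · simp only [if_neg h]
      exact isProbVec_single (jsel φ)
  have hDeq : ∀ i, Dq τ cF I π qq i = Dq τ cF I π qstar i := by
    intro i
    unfold Dq
    congr 1
    refine Finset.sum_congr rfl fun φ _ => ?_
    by_cases h : 0 < π φ
    · rw [hqq]; simp only [if_pos h]
    · have hz0 : π φ = 0 := le_antisymm (not_lt.mp h) (hπ0 φ)
      rw [hz0, zero_mul, zero_mul]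
  have hpayle : ∀ φ, ps ⬝ᵥ (UpsilonMat I φ *ᵥ qstar φ) ≤ Vm I φ ps :=
    fun φ => payoff_le_Vm I φ ps ((probVec_iff (qstar φ)).mp (hqstarS φ))
  have hupper : ∑ i, ps i * Dq τ cF I π qstar i ≤ Hf τ cF I π ps := by
    rw [sum_pD]
    unfold Hf
    exact add_le_add_right (Finset.sum_le_sum fun φ _ =>
      mul_le_mul_of_nonneg_left (hpayle φ) (hπ0 φ)) _
  have hlower : ∀ p' : Fin m → ℝ, IsProbVec p' →
      Hf τ cF I π ps ≤ ∑ i, p' i * Dq τ cF I π qstar i := by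
    intro p' hp'
    calc Hf τ cF I π ps = ∑ i, p' i * Hf τ cF I π ps := by
          rw [← Finset.sum_mul, hp'.2, one_mul]
      _ ≤ ∑ i, p' i * Dq τ cF I π qstar i :=
          Finset.sum_le_sum fun i _ => mul_le_mul_of_nonneg_left (hqstarD i) (hp'.1 i)
  have hequal : ∑ i, ps i * Dq τ cF I π qstar i = Hf τ cF I π ps :=
    le_antisymm hupper (hlower ps ((probVec_iff ps).mp hpsmem))
  have hcomp : ∀ φ, 0 < π φ → ps ⬝ᵥ (UpsilonMat I φ *ᵥ qstar φ) = Vm I φ ps := by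
    intro φ hφ
    have h1 := hequal
    rw [sum_pD] at h1
    unfold Hf at h1
    have h2 : ∑ φ, π φ * (Vm I φ ps - ps ⬝ᵥ (UpsilonMat I φ *ᵥ qstar φ)) = 0 := by
      have h3 : ∑ φ, π φ * (ps ⬝ᵥ (UpsilonMat I φ *ᵥ qstar φ))
          = ∑ φ, π φ * Vm I φ ps := add_left_cancel h1
      have h4 : ∀ ψ : Fin nφ, π ψ * (Vm I ψ ps - ps ⬝ᵥ (UpsilonMat I ψ *ᵥ qstar ψ))
          = π ψ * Vm I ψ ps - π ψ * (ps ⬝ᵥ (UpsilonMat I ψ *ᵥ qstar ψ)) :=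
        fun ψ => by ring
      simp_rw [h4]
      rw [Finset.sum_sub_distrib, h3, sub_self]
    have hterm := (Finset.sum_eq_zero_iff_of_nonneg (fun ψ _ =>
      mul_nonneg (hπ0 ψ) (sub_nonneg.mpr (hpayle ψ)))).mp h2 φ (Finset.mem_univ φ)
    rcases mul_eq_zero.mp hterm with h | h
    · exact absurd h (ne_of_gt hφ)
    · have := sub_eq_zero.mp h
      linarith
  -- assemble the equilibrium
  refine ⟨ps, qq, ⟨(probVec_iff ps).mp hpsmem, hqqP, ?_, ?_⟩, hpslt⟩
  · intro p' hp'
    have hq1 : ∀ φ, ∑ j, qq φ j = 1 := fun φ => (hqqP φ).2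
    rw [avg_cost_eq τ cF I hπ1 ps hq1, avg_cost_eq τ cF I hπ1 p' hq1]
    simp_rw [hDeq]
    exact le_trans hupper (hlower p' hp')
  · intro φ q' hq'
    have hle := payoff_le_Vm I φ ps hq'
    by_cases h : 0 < π φ
    · have heq : qq φ = qstar φ := by rw [hqq]; simp only [if_pos h]
      rw [heq, hcomp φ h]
      exact hle
    · have heq : qq φ = Pi.single (jsel φ) 1 := by rw [hqq]; simp only [if_neg h]
      have hval : ps ⬝ᵥ (UpsilonMat I φ *ᵥ Pi.single (jsel φ) 1) = Vm I φ ps := by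
        rw [dot_upsilon, sum_single_mul (fun j => I φ j * tailP ps j) (jsel φ)]
        exact (Vm_eq_of (jsel φ) (hjsel φ)).symm
      rw [heq, hval]
      exact hle

end MTDaux

/-- Theorem 1: a moving target defense (a Bayesian Nash equilibrium in which every entry of
the defender's strategy is strictly less than one) exists if, and only if,
`c_F/τ_{m-1} ≤ c_F/τ_m + Σ_φ π_φ I_m^φ`. -/
theorem mtd_exists_iff (m nφ : ℕ) (hm : 2 ≤ m)
    (τ : Fin m → ℝ) (hτmono : StrictMono τ) (hτ1 : 1 ≤ τ ⟨0, by omega⟩)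
    (cF : ℝ) (hcF : 0 < cF)
    (π : Fin nφ → ℝ) (hπ0 : ∀ φ, 0 ≤ π φ) (hπ1 : ∑ φ, π φ = 1)
    (I : Fin nφ → Fin m → ℝ)
    (hI : ∀ φ, (0 < I φ ⟨0, by omega⟩ ∧ StrictMono (I φ)) ∨ (∀ j, I φ j = 0)) :
    (∃ (p : Fin m → ℝ) (q : Fin nφ → Fin m → ℝ), IsBNE τ cF I π p q ∧ ∀ i, p i < 1) ↔
    cF / τ ⟨m - 2, by omega⟩ ≤
      cF / τ ⟨m - 1, by omega⟩ + ∑ φ, π φ * I φ ⟨m - 1, by omega⟩ := by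
  constructor
  · intro hex
    exact MTDaux.forward m nφ hm τ hτmono cF hcF π hπ0 hπ1 I
      ⟨m - 2, by omega⟩ ⟨m - 1, by omega⟩ ⟨0, by omega⟩ rfl rfl rfl hτ1 hI hex
  · intro hcond
    exact MTDaux.backward m nφ hm τ hτmono cF hcF π hπ0 hπ1 I
      ⟨m - 2, by omega⟩ ⟨m - 1, by omega⟩ ⟨0, by omega⟩ rfl rfl rfl hτ1 hI hcond
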